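/- Let F: G → H be a surjective morphism of set-valued deformation functors on local Artin ℂ-algebras, where G and H admit miniversal families and the tangent map t_G → t_H is surjective. If G is unobstructed (i.e., G(A′) → G(A) is surjective for every small extension A′ → A), then H is unobstructed and F is strongly surjective (G(B) → G(A) ×_{H(A)} H(B) is surjective for every small extension B → A). -/

import Mathlib

open CategoryTheory

/-- Abstract form of the deformation-theory sublemma: `G`, `H` are set-valued deformation
functors on (a category `C` of) local Artin ℂ-algebras, `SE` is the class of small
extensions, `Dual` is the ring of dual numbers so that `G.obj Dual`, `H.obj Dual` are the
tangent spaces, miniversality is encoded by transitive tangent-space actions on the fibers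
of restriction along small extensions, and `F : G ⟶ H` is a surjective morphism with
surjective tangent map. If `G` is unobstructed, then `H` is unobstructed and `F` is
strongly surjective: `G(B) → G(A) ×_{H(A)} H(B)` is surjective for every small extension
`B → A`. -/
theorem deformation_sublemma
    {C : Type*} [Category C] (SE : MorphismProperty C) (Dual : C)
    (G H : C ⥤ Type) (F : G ⟶ H)
    -- miniversality: the tangent space acts on fibers of small extensions, transitively
    (actG : ∀ {A' A : C} (p : A' ⟶ A), SE p → G.obj Dual → G.obj A' → G.obj A')
    (actH : ∀ {A' A : C} (p : A' ⟶ A), SE p → H.obj Dual → H.obj A' → H.obj A')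
    (actG_fiber : ∀ {A' A : C} (p : A' ⟶ A) (hp : SE p) (v : G.obj Dual) (ξ : G.obj A'),
      G.map p (actG p hp v ξ) = G.map p ξ)
    (actG_trans : ∀ {A' A : C} (p : A' ⟶ A) (hp : SE p) (ξ η : G.obj A'),
      G.map p ξ = G.map p η → ∃ v, actG p hp v ξ = η)
    (actH_fiber : ∀ {A' A : C} (p : A' ⟶ A) (hp : SE p) (v : H.obj Dual) (ξ : H.obj A'),
      H.map p (actH p hp v ξ) = H.map p ξ)
    (actH_trans : ∀ {A' A : C} (p : A' ⟶ A) (hp : SE p) (ξ η : H.obj A'),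
      H.map p ξ = H.map p η → ∃ v, actH p hp v ξ = η)
    (F_equivariant : ∀ {A' A : C} (p : A' ⟶ A) (hp : SE p) (v : G.obj Dual) (ξ : G.obj A'),
      F.app A' (actG p hp v ξ) = actH p hp (F.app Dual v) (F.app A' ξ))
    -- `F` is surjective
    (F_surj : ∀ A : C, Function.Surjective (F.app A))
    -- the tangent map `t_G → t_H` is surjective
    (tangent_surj : Function.Surjective (F.app Dual))
    -- `G` is unobstructed
    (G_unobstructed : ∀ {A' A : C} (p : A' ⟶ A), SE p → Function.Surjective (G.map p)) :
    -- `H` is unobstructed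
    (∀ {A' A : C} (p : A' ⟶ A), SE p → Function.Surjective (H.map p)) ∧
    -- `F` is strongly surjective
    (∀ {B A : C} (p : B ⟶ A), SE p → ∀ (a : G.obj A) (b : H.obj B),
      H.map p b = F.app A a → ∃ g : G.obj B, G.map p g = a ∧ F.app B g = b) := by
  constructor
  · intro A' A p hp η
    obtain ⟨ξ, hξ⟩ := F_surj A η
    obtain ⟨ξ', hξ'⟩ := G_unobstructed p hp ξ
    refine ⟨F.app A' ξ', ?_⟩
    have := ConcreteCategory.congr_hom (F.naturality p) ξ'
    simp only [types_comp_apply] at this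
    rw [← this, hξ', hξ]
  · intro B A p hp a b hb
    obtain ⟨g0, hg0⟩ := G_unobstructed p hp a
    obtain ⟨v, hv⟩ := actH_trans p hp (F.app B g0) b (by
      have := ConcreteCategory.congr_hom (F.naturality p) g0
      simp only [types_comp_apply] at this
      rw [← this, hg0, hb])
    obtain ⟨w, hw⟩ := tangent_surj v
    refine ⟨actG p hp w g0, ?_, ?_⟩
    · rw [actG_fiber, hg0]
    · rw [F_equivariant, hw, hv]
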